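/- The functions u(x,y) = |y| − (1/2)cosh(2x) and v(x,y) = −y·sinh(2x) satisfy ∂u/∂x = ∂v/∂y and ∂v/∂x = −2(v² + y²)^{1/2} ∂u/∂y at every point (x,y) ∈ ℝ² with y ≠ 0. -/
import Mathlib


/-- u(x,y) = |y| − (1/2) cosh 2x. -/
noncomputable def uPar (x y : ℝ) : ℝ := |y| - (1 / 2) * Real.cosh (2 * x)

/-- v(x,y) = −y sinh 2x. -/
noncomputable def vPar (x y : ℝ) : ℝ := -y * Real.sinh (2 * x)

theorem paraboloid_solution (x y : ℝ) (hy : y ≠ 0) :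
    deriv (fun t : ℝ => uPar t y) x = deriv (fun t : ℝ => vPar x t) y ∧
    deriv (fun t : ℝ => vPar t y) x =
      -2 * Real.sqrt ((vPar x y) ^ 2 + y ^ 2) * deriv (fun t : ℝ => uPar x t) y := by
  -- u_x
  have hux : deriv (fun t : ℝ => uPar t y) x = -Real.sinh (2 * x) := by
    have h : HasDerivAt (fun t : ℝ => uPar t y)
        (0 - 1 / 2 * (Real.sinh (2 * x) * 2)) x := by
      have h1 : HasDerivAt (fun t : ℝ => 2 * t) 2 x := by
        simpa using (hasDerivAt_id x).const_mul 2
      exact (hasDerivAt_const x |y|).sub ((h1.cosh).const_mul (1 / 2))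
    rw [h.deriv]; ring
  -- v_y
  have hvy : deriv (fun t : ℝ => vPar x t) y = -Real.sinh (2 * x) := by
    have h : HasDerivAt (fun t : ℝ => vPar x t) (-1 * Real.sinh (2 * x)) y := by
      simpa [vPar] using ((hasDerivAt_id y).neg.mul_const (Real.sinh (2 * x)))
    rw [h.deriv]; ring
  -- v_x
  have hvx : deriv (fun t : ℝ => vPar t y) x = -y * (Real.cosh (2 * x) * 2) := by
    have h1 : HasDerivAt (fun t : ℝ => 2 * t) 2 x := by
      simpa using (hasDerivAt_id x).const_mul 2
    have h : HasDerivAt (fun t : ℝ => vPar t y) (-y * (Real.cosh (2 * x) * 2)) x :=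
      (h1.sinh).const_mul (-y)
    exact h.deriv
  -- sqrt term
  have hsq : Real.sqrt ((vPar x y) ^ 2 + y ^ 2) = |y| * Real.cosh (2 * x) := by
    have : (vPar x y) ^ 2 + y ^ 2 = (y * Real.cosh (2 * x)) ^ 2 := by
      have hc := Real.cosh_sq (2 * x)
      simp only [vPar]; nlinarith [hc]
    rw [this, Real.sqrt_sq_eq_abs, abs_mul,
      abs_of_pos (Real.cosh_pos (x := 2 * x))]
  -- u_y
  have huy : deriv (fun t : ℝ => uPar x t) y = if 0 < y then 1 else -1 := by
    rcases lt_or_gt_of_ne hy with hneg | hpos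
    · have hev : (fun t : ℝ => uPar x t) =ᶠ[nhds y]
          (fun t : ℝ => -t - 1 / 2 * Real.cosh (2 * x)) := by
        filter_upwards [Iio_mem_nhds hneg] with t ht
        simp [uPar, abs_of_neg (Set.mem_Iio.mp ht)]
      rw [hev.deriv_eq]
      have h : HasDerivAt (fun t : ℝ => -t - 1 / 2 * Real.cosh (2 * x)) (-1) y := by
        simpa using ((hasDerivAt_id y).neg.sub_const (1 / 2 * Real.cosh (2 * x)))
      rw [h.deriv, if_neg (not_lt.mpr hneg.le)]
    · have hev : (fun t : ℝ => uPar x t) =ᶠ[nhds y]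
          (fun t : ℝ => t - 1 / 2 * Real.cosh (2 * x)) := by
        filter_upwards [Ioi_mem_nhds hpos] with t ht
        simp [uPar, abs_of_pos (Set.mem_Ioi.mp ht)]
      rw [hev.deriv_eq]
      have h : HasDerivAt (fun t : ℝ => t - 1 / 2 * Real.cosh (2 * x)) 1 y := by
        simpa using ((hasDerivAt_id y).sub_const (1 / 2 * Real.cosh (2 * x)))
      rw [h.deriv, if_pos hpos]
  refine ⟨hux.trans hvy.symm, ?_⟩
  rw [hvx, hsq, huy]
  rcases lt_or_gt_of_ne hy with hneg | hpos
  · rw [if_neg (not_lt.mpr hneg.le), abs_of_neg hneg]; ring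
  · rw [if_pos hpos, abs_of_pos hpos]; ring
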